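/- Let F be a field, N, Q positive integers, witness vectors a, b, c ∈ F^N, public data u_q, v_q, w_q ∈ F^N, k_q ∈ F for q = 1,…,Q, and suppose the constraint system 𝒞 is NOT satisfied by (a,b,c). For each nonzero y ∈ F, let t_y[X] = r₁[X]·(r_y[X] + s_y[X]) − k̂(y) be the Sonic Laurent polynomial. Then the set of nonzero y ∈ F for which the coefficient of X^0 in t_y[X] is zero has at most 2N + Q elements. -/

import Mathlib

open LaurentPolynomial

/-- `r₁[X] = r[X,1] = Σᵢ aᵢ Xⁱ + Σᵢ bᵢ X⁻ⁱ + Σᵢ cᵢ X^{-i-N}` of the Sonic encoding. -/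
noncomputable def sonicR1 {F : Type*} [Field F] {N : ℕ} (a b c : Fin N → F) :
    LaurentPolynomial F :=
  (∑ i : Fin N, LaurentPolynomial.C (a i) * LaurentPolynomial.T ((i : ℤ) + 1)) +
  (∑ i : Fin N, LaurentPolynomial.C (b i) * LaurentPolynomial.T (-((i : ℤ) + 1))) +
  (∑ i : Fin N, LaurentPolynomial.C (c i) * LaurentPolynomial.T (-((i : ℤ) + 1) - (N : ℤ)))

/-- `r_y[X] = r[X,y] = Σᵢ aᵢ (yX)ⁱ + Σᵢ bᵢ (yX)⁻ⁱ + Σᵢ cᵢ (yX)^{-i-N}`. -/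
noncomputable def sonicRy {F : Type*} [Field F] {N : ℕ} (a b c : Fin N → F) (y : F) :
    LaurentPolynomial F :=
  (∑ i : Fin N, LaurentPolynomial.C (a i * y ^ ((i : ℤ) + 1)) *
      LaurentPolynomial.T ((i : ℤ) + 1)) +
  (∑ i : Fin N, LaurentPolynomial.C (b i * y ^ (-((i : ℤ) + 1))) *
      LaurentPolynomial.T (-((i : ℤ) + 1))) +
  (∑ i : Fin N, LaurentPolynomial.C (c i * y ^ (-((i : ℤ) + 1) - (N : ℤ))) *
      LaurentPolynomial.T (-((i : ℤ) + 1) - (N : ℤ)))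

/-- `s_y[X] = s[X,y] = Σᵢ ûᵢ(y) X⁻ⁱ + Σᵢ v̂ᵢ(y) Xⁱ + Σᵢ ŵᵢ(y) X^{i+N}` where
`ûᵢ(y) = Σ_q u_{q,i} y^{q+N}`, `v̂ᵢ(y) = Σ_q v_{q,i} y^{q+N}`,
`ŵᵢ(y) = -yⁱ - y⁻ⁱ + Σ_q w_{q,i} y^{q+N}`. -/
noncomputable def sonicSy {F : Type*} [Field F] {N Q : ℕ}
    (u v w : Fin Q → Fin N → F) (y : F) : LaurentPolynomial F :=
  (∑ i : Fin N, LaurentPolynomial.C (∑ q : Fin Q, u q i * y ^ ((q : ℤ) + 1 + (N : ℤ))) *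
      LaurentPolynomial.T (-((i : ℤ) + 1))) +
  (∑ i : Fin N, LaurentPolynomial.C (∑ q : Fin Q, v q i * y ^ ((q : ℤ) + 1 + (N : ℤ))) *
      LaurentPolynomial.T ((i : ℤ) + 1)) +
  (∑ i : Fin N, LaurentPolynomial.C (-y ^ ((i : ℤ) + 1) - y ^ (-((i : ℤ) + 1)) +
        ∑ q : Fin Q, w q i * y ^ ((q : ℤ) + 1 + (N : ℤ))) *
      LaurentPolynomial.T ((i : ℤ) + 1 + (N : ℤ)))

/-- `k̂(y) = Σ_q k_q y^{q+N}`. -/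
def sonicKhat {F : Type*} [Field F] {Q : ℕ} (N : ℕ) (k : Fin Q → F) (y : F) : F :=
  ∑ q : Fin Q, k q * y ^ ((q : ℤ) + 1 + (N : ℤ))

lemma key {F : Type*} [Field F] {ι κ : Type*} [Fintype ι] [Fintype κ]
    (α : ι → F) (β : κ → F) (e : ι → ℤ) (f : κ → ℤ) :
    (((∑ i, LaurentPolynomial.C (α i) * LaurentPolynomial.T (e i)) *
      (∑ j, LaurentPolynomial.C (β j) * LaurentPolynomial.T (f j)) : LaurentPolynomial F)).coeff 0
      = ∑ i, ∑ j, if e i + f j = 0 then α i * β j else 0 := by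
  rw [Finset.sum_mul_sum]
  rw [AddMonoidAlgebra.coeff_sum, Finsupp.finset_sum_apply]
  refine Finset.sum_congr rfl fun i _ => ?_
  rw [AddMonoidAlgebra.coeff_sum, Finsupp.finset_sum_apply]
  refine Finset.sum_congr rfl fun j _ => ?_
  rw [← LaurentPolynomial.single_eq_C_mul_T, ← LaurentPolynomial.single_eq_C_mul_T,
    AddMonoidAlgebra.single_mul_single]
  rw [AddMonoidAlgebra.coeff_single, Finsupp.single_apply]

section conds
variable {N : ℕ}
lemma hpp (i j : Fin N) : ¬((i:ℤ)+1 + ((j:ℤ)+1) = 0) := by omega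
lemma hpm (i j : Fin N) : ((i:ℤ)+1 + -((j:ℤ)+1) = 0) ↔ i = j := by rw [Fin.ext_iff]; omega
lemma hpmm (i j : Fin N) : ¬((i:ℤ)+1 + (-((j:ℤ)+1) - (N:ℤ)) = 0) := by
  have := i.isLt; omega
lemma hmp (i j : Fin N) : (-((i:ℤ)+1) + ((j:ℤ)+1) = 0) ↔ i = j := by rw [Fin.ext_iff]; omega
lemma hmm (i j : Fin N) : ¬(-((i:ℤ)+1) + -((j:ℤ)+1) = 0) := by omega
lemma hmmm (i j : Fin N) : ¬(-((i:ℤ)+1) + (-((j:ℤ)+1) - (N:ℤ)) = 0) := by omega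
lemma hmpp (i j : Fin N) : ¬(-((i:ℤ)+1) + ((j:ℤ)+1+(N:ℤ)) = 0) := by
  have := i.isLt; omega
lemma hmmp (i j : Fin N) : ¬(-((i:ℤ)+1) - (N:ℤ) + ((j:ℤ)+1) = 0) := by
  have := j.isLt; omega
lemma hmmm2 (i j : Fin N) : ¬(-((i:ℤ)+1) - (N:ℤ) + -((j:ℤ)+1) = 0) := by omega
lemma hmmmm (i j : Fin N) : ¬(-((i:ℤ)+1) - (N:ℤ) + (-((j:ℤ)+1) - (N:ℤ)) = 0) := by omega
lemma hmmpp (i j : Fin N) : (-((i:ℤ)+1) - (N:ℤ) + ((j:ℤ)+1+(N:ℤ)) = 0) ↔ i = j := by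
  rw [Fin.ext_iff]; omega
lemma hppp (i j : Fin N) : ¬((i:ℤ)+1 + ((j:ℤ)+1+(N:ℤ)) = 0) := by omega
end conds

lemma LPadd_apply {F : Type*} [Field F] (f g : LaurentPolynomial F) (x : ℤ) :
    (f + g).coeff x = f.coeff x + g.coeff x := Finsupp.add_apply f.coeff g.coeff x

lemma C_apply_zero {F : Type*} [Field F] (r : F) : (LaurentPolynomial.C r).coeff 0 = r := by
  rw [show (LaurentPolynomial.C r : LaurentPolynomial F) = AddMonoidAlgebra.single 0 r by
    rw [LaurentPolynomial.single_eq_C_mul_T, LaurentPolynomial.T_zero, mul_one]]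
  rw [AddMonoidAlgebra.coeff_single]
  exact Finsupp.single_eq_same

lemma coeff_zero_eq {F : Type*} [Field F] {N Q : ℕ}
    (a b c : Fin N → F) (u v w : Fin Q → Fin N → F) (k : Fin Q → F) (y : F) :
    (sonicR1 a b c * (sonicRy a b c y + sonicSy u v w y) -
        LaurentPolynomial.C (sonicKhat N k y)).coeff 0
      = (∑ i : Fin N, (a i * b i - c i) * (y ^ ((i:ℤ)+1) + y ^ (-((i:ℤ)+1))))
        + ∑ q : Fin Q, ((∑ j, a j * u q j) + (∑ j, b j * v q j) + (∑ j, c j * w q j) - k q)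
            * y ^ ((q:ℤ)+1+(N:ℤ)) := by
  rw [AddMonoidAlgebra.coeff_sub, Finsupp.sub_apply, C_apply_zero, sonicR1, sonicRy, sonicSy]
  simp only [mul_add, add_mul, LPadd_apply, key]
  simp only [hpp, hpm, hpmm, hmp, hmm, hmmm, hmpp, hmmp, hmmm2, hmmmm, hmmpp, hppp,
    if_false, if_true, Finset.sum_const_zero, Finset.sum_ite_eq, Finset.sum_ite_eq',
    Finset.mem_univ, if_true, add_zero, zero_add, sonicKhat]
  have swap : ∀ (f : Fin N → F) (g : Fin Q → Fin N → F),
      (∑ x : Fin N, f x * ∑ q : Fin Q, g q x * y ^ ((q:ℤ) + 1 + (N:ℤ)))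
        = ∑ q : Fin Q, (∑ j : Fin N, f j * g q j) * y ^ ((q:ℤ) + 1 + (N:ℤ)) := by
    intro f g
    simp_rw [Finset.mul_sum, Finset.sum_mul]
    rw [Finset.sum_comm]
    exact Finset.sum_congr rfl fun q _ => Finset.sum_congr rfl fun x _ => by ring
  rw [Finset.sum_add_distrib, swap a u, swap b v, swap c w]
  simp only [sub_mul, add_mul, mul_add, mul_sub, mul_neg, neg_mul,
    Finset.sum_add_distrib, Finset.sum_sub_distrib]
  rw [show ∑ x : Fin N, b x * (a x * y ^ ((x:ℤ)+1)) = ∑ x : Fin N, a x * b x * y ^ ((x:ℤ)+1)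
      from Finset.sum_congr rfl fun x _ => by ring,
    show ∑ x : Fin N, a x * (b x * y ^ (-((x:ℤ)+1))) = ∑ x : Fin N, a x * b x * y ^ (-((x:ℤ)+1))
      from Finset.sum_congr rfl fun x _ => by ring]
  simp only [Finset.sum_neg_distrib]
  abel

noncomputable def sonicP {F : Type*} [Field F] {N Q : ℕ}
    (a b c : Fin N → F) (u v w : Fin Q → Fin N → F) (k : Fin Q → F) : Polynomial F :=
  (∑ i : Fin N, Polynomial.C (a i * b i - c i) *
      (Polynomial.X ^ (N + (i:ℕ) + 1) + Polynomial.X ^ (N - 1 - (i:ℕ)))) +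
  ∑ q : Fin Q, Polynomial.C ((∑ j, a j * u q j) + (∑ j, b j * v q j) + (∑ j, c j * w q j) - k q)
      * Polynomial.X ^ (2*N + (q:ℕ) + 1)

section sonicPfacts
variable {F : Type*} [Field F] {N Q : ℕ}
  (a b c : Fin N → F) (u v w : Fin Q → Fin N → F) (k : Fin Q → F)

lemma sonicP_natDegree_le (hQ : 0 < Q) : (sonicP a b c u v w k).natDegree ≤ 2*N + Q := by
  refine le_trans (Polynomial.natDegree_add_le _ _) (max_le ?_ ?_)
  · refine Polynomial.natDegree_sum_le_of_forall_le _ _ fun i _ => ?_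
    refine le_trans (Polynomial.natDegree_C_mul_le _ _) ?_
    refine le_trans (Polynomial.natDegree_add_le _ _) (max_le ?_ ?_) <;>
      rw [Polynomial.natDegree_X_pow] <;> have := i.isLt <;> omega
  · refine Polynomial.natDegree_sum_le_of_forall_le _ _ fun q _ => ?_
    refine le_trans (Polynomial.natDegree_C_mul_le _ _) ?_
    rw [Polynomial.natDegree_X_pow]
    have := q.isLt; omega

lemma sonicP_eval {y : F} (hy : y ≠ 0) :
    (sonicP a b c u v w k).eval y
      = y ^ N * ((∑ i : Fin N, (a i * b i - c i) * (y ^ ((i:ℤ)+1) + y ^ (-((i:ℤ)+1))))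
        + ∑ q : Fin Q, ((∑ j, a j * u q j) + (∑ j, b j * v q j) + (∑ j, c j * w q j) - k q)
            * y ^ ((q:ℤ)+1+(N:ℤ))) := by
  rw [sonicP, Polynomial.eval_add, Polynomial.eval_finset_sum, Polynomial.eval_finset_sum,
    mul_add, Finset.mul_sum, Finset.mul_sum]
  congr 1
  · refine Finset.sum_congr rfl fun i _ => ?_
    have hi := i.isLt
    simp only [Polynomial.eval_mul, Polynomial.eval_add, Polynomial.eval_pow,
      Polynomial.eval_X, Polynomial.eval_C]
    rw [← zpow_natCast y (N + (i:ℕ) + 1), ← zpow_natCast y (N - 1 - (i:ℕ)),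
      ← zpow_natCast y N,
      show ((N + (i:ℕ) + 1 : ℕ) : ℤ) = (N:ℤ) + ((i:ℤ)+1) by omega,
      show ((N - 1 - (i:ℕ) : ℕ) : ℤ) = (N:ℤ) + (-((i:ℤ)+1)) by omega,
      ]
    simp only [zpow_add₀ hy]
    ring
  · refine Finset.sum_congr rfl fun q _ => ?_
    simp only [Polynomial.eval_mul, Polynomial.eval_pow, Polynomial.eval_X, Polynomial.eval_C]
    rw [← zpow_natCast y (2*N + (q:ℕ) + 1), ← zpow_natCast y N,
      show ((2*N + (q:ℕ) + 1 : ℕ) : ℤ) = (N:ℤ) + ((q:ℤ)+1+(N:ℤ)) by omega,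
      zpow_add₀ hy]
    ring

lemma sonicP_coeff1 (i₀ : Fin N) :
    (sonicP a b c u v w k).coeff (N - 1 - (i₀:ℕ)) = a i₀ * b i₀ - c i₀ := by
  rw [sonicP, Polynomial.coeff_add, Polynomial.finset_sum_coeff, Polynomial.finset_sum_coeff]
  simp only [Polynomial.coeff_C_mul, Polynomial.coeff_add, Polynomial.coeff_X_pow]
  rw [Finset.sum_eq_single i₀ ?h1 ?h2, Finset.sum_eq_zero ?h3, add_zero]
  case h1 =>
    intro i _ hne
    have hv : (i:ℕ) ≠ (i₀:ℕ) := fun hh => hne (Fin.ext hh)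
    have := i.isLt; have := i₀.isLt
    rw [if_neg (by omega), if_neg (by omega)]; ring
  case h2 => intro h; exact absurd (Finset.mem_univ i₀) h
  case h3 =>
    intro q _
    have := i₀.isLt
    rw [if_neg (by omega), mul_zero]
  have := i₀.isLt
  rw [if_neg (by omega), if_pos rfl]; ring

lemma sonicP_coeff2 (q₀ : Fin Q) :
    (sonicP a b c u v w k).coeff (2*N + (q₀:ℕ) + 1)
      = (∑ j, a j * u q₀ j) + (∑ j, b j * v q₀ j) + (∑ j, c j * w q₀ j) - k q₀ := by
  rw [sonicP, Polynomial.coeff_add, Polynomial.finset_sum_coeff, Polynomial.finset_sum_coeff]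
  simp only [Polynomial.coeff_C_mul, Polynomial.coeff_add, Polynomial.coeff_X_pow]
  rw [Finset.sum_eq_single q₀ ?g1 ?g2, Finset.sum_eq_zero ?g3, zero_add]
  case g1 =>
    intro q _ hne
    have hv : (q:ℕ) ≠ (q₀:ℕ) := fun hh => hne (Fin.ext hh)
    rw [if_neg (by omega), mul_zero]
  case g2 => intro h; exact absurd (Finset.mem_univ q₀) h
  case g3 =>
    intro i _
    have := i.isLt
    rw [if_neg (by omega), if_neg (by omega)]; ring
  rw [if_pos rfl, mul_one]

end sonicPfacts

/-- (Soundness of Sonic's zero-constant-term test.)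
If the constraint system is NOT satisfied by `(a, b, c)`, then the set of nonzero
`y ∈ F` for which the coefficient of `X^0` in
`t_y[X] = r₁[X]·(r_y[X] + s_y[X]) - k̂(y)` vanishes is finite, with at most
`2N + Q` elements. -/
theorem sonic_zero_constant_term_soundness (F : Type*) [Field F] (N Q : ℕ)
    (hN : 0 < N) (hQ : 0 < Q)
    (a b c : Fin N → F) (u v w : Fin Q → Fin N → F) (k : Fin Q → F)
    (hunsat : ¬ ((∀ i, a i * b i = c i) ∧
      (∀ q, (∑ j, a j * u q j) + (∑ j, b j * v q j) + (∑ j, c j * w q j) = k q))) :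
    {y : F | y ≠ 0 ∧
        (sonicR1 a b c * (sonicRy a b c y + sonicSy u v w y) -
          LaurentPolynomial.C (sonicKhat N k y)).coeff 0 = 0}.Finite ∧
    Set.ncard {y : F | y ≠ 0 ∧
        (sonicR1 a b c * (sonicRy a b c y + sonicSy u v w y) -
          LaurentPolynomial.C (sonicKhat N k y)).coeff 0 = 0} ≤ 2 * N + Q := by
  classical
  have hP0 : sonicP a b c u v w k ≠ 0 := by
    intro h
    rw [not_and_or] at hunsat
    rcases hunsat with h1 | h2
    · push_neg at h1; obtain ⟨i₀, hi⟩ := h1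
      have hc := sonicP_coeff1 a b c u v w k i₀
      rw [h, Polynomial.coeff_zero] at hc
      exact hi (by rw [← sub_eq_zero]; exact hc.symm)
    · push_neg at h2; obtain ⟨q₀, hq⟩ := h2
      have hc := sonicP_coeff2 a b c u v w k q₀
      rw [h, Polynomial.coeff_zero] at hc
      exact hq (by rw [← sub_eq_zero]; exact hc.symm)
  have hsub : {y : F | y ≠ 0 ∧
      (sonicR1 a b c * (sonicRy a b c y + sonicSy u v w y) -
        LaurentPolynomial.C (sonicKhat N k y)).coeff 0 = 0}
      ⊆ ((sonicP a b c u v w k).roots.toFinset : Set F) := by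
    rintro y ⟨hy, h0⟩
    rw [coeff_zero_eq] at h0
    have he := sonicP_eval a b c u v w k (y := y) hy
    rw [h0, mul_zero] at he
    rw [Finset.mem_coe, Multiset.mem_toFinset, Polynomial.mem_roots hP0]
    exact he
  refine ⟨Set.Finite.subset (Finset.finite_toSet _) hsub, ?_⟩
  calc Set.ncard _ ≤ Set.ncard ((sonicP a b c u v w k).roots.toFinset : Set F) :=
        Set.ncard_le_ncard hsub (Finset.finite_toSet _)
    _ = (sonicP a b c u v w k).roots.toFinset.card := Set.ncard_coe_finset _
    _ ≤ Multiset.card (sonicP a b c u v w k).roots := Multiset.toFinset_card_le _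
    _ ≤ (sonicP a b c u v w k).natDegree := Polynomial.card_roots' _
    _ ≤ 2 * N + Q := sonicP_natDegree_le a b c u v w k hQ
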